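/- A circuit signature σ of a directed graph D is acyclic if and only if σ = cir^w for some generic weight function w: E → ℝ, where cir^w selects for each cycle the orientation whose positive arc has larger total w-weight. -/

import Mathlib

open Finset Pointwise

noncomputable section

variable {V E ι : Type*}

/-- The vector `x_f ∈ ℝ^V` of an edge `f` with tail `t f` and head `h f`:
`+1` at the head, `-1` at the tail, `0` elsewhere (so `0` for a loop). -/
def xvec [DecidableEq V] (t h : E → V) (f : E) : V → ℝ :=
  fun v => (if v = h f then 1 else 0) - (if v = t f then 1 else 0)

/-- The extended root polytope of the subgraph with edge set `S`:
`conv({0} ∪ {x_f : f ∈ S})`. -/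
def rootPolyOn [DecidableEq V] (t h : E → V) (S : Set E) : Set (V → ℝ) :=
  convexHull ℝ ({0} ∪ (xvec t h '' S))

/-- The underlying (simple) undirected graph of the edges in `S`. -/
def underlyingOn (t h : E → V) (S : Set E) : SimpleGraph V :=
  SimpleGraph.fromRel (fun u v => ∃ f ∈ S, t f = u ∧ h f = v)

/-- A spanning tree: a set of edges whose underlying graph is connected and which
has `|V| - 1` edges. -/
def IsSpanningTree [Fintype V] (t h : E → V) (T : Finset E) : Prop :=
  (underlyingOn t h ↑T).Connected ∧ T.card + 1 = Fintype.card V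

/-- The number of lattice points of the `k`-th dilate of `Q`. -/
def latCount [Fintype ι] (Q : Set (ι → ℝ)) (k : ℕ) : ℕ :=
  Nat.card {p : ι → ℤ // (fun i => (p i : ℝ)) ∈ (k : ℝ) • Q}

/-- The Ehrhart series of `Q` as a formal power series. -/
def ehrSeries [Fintype ι] (Q : Set (ι → ℝ)) : PowerSeries ℤ :=
  PowerSeries.mk fun k => (latCount Q k : ℤ)

/-- The dimension of a polytope: the rank of its vector span. -/
def pdim (Q : Set (ι → ℝ)) : ℕ := Module.finrank ℝ ↥(vectorSpan ℝ Q)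

/-- `p` is the `h^*`-polynomial of `Q`: `(1-t)^{dim Q + 1} · Ehr_Q(t) = p(t)`. -/
def IsHStar [Fintype ι] (Q : Set (ι → ℝ)) (p : Polynomial ℤ) : Prop :=
  (1 - PowerSeries.X) ^ (pdim Q + 1) * ehrSeries Q = PowerSeries.mk fun i => p.coeff i

/-- The `±1` vector of a signed cycle with positive arc `Cp` and negative arc `Cm`. -/
def chiVec [DecidableEq E] (Cp Cm : Finset E) : E → ℝ :=
  fun f => (if f ∈ Cp then 1 else 0) - (if f ∈ Cm then 1 else 0)

/-- A circulation: an assignment of reals to edges with zero net flow at each vertex. -/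
def IsCirculation [Fintype E] [DecidableEq V] (t h : E → V) (φ : E → ℝ) : Prop :=
  ∑ f, φ f • xvec t h f = 0

/-- `(Cp, Cm)` is a signed cycle: the arcs are disjoint, the union is nonempty, the
`±1` vector is a circulation, and the support `Cp ∪ Cm` is minimal among supports of
nonzero circulations (i.e. it is a circuit of the graphic oriented matroid). -/
def IsSignedCycle [Fintype E] [DecidableEq E] [DecidableEq V] (t h : E → V)
    (Cp Cm : Finset E) : Prop :=
  Disjoint Cp Cm ∧ (Cp ∪ Cm).Nonempty ∧ IsCirculation t h (chiVec Cp Cm) ∧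
    ∀ φ : E → ℝ, IsCirculation t h φ → φ ≠ 0 →
      (∀ f, φ f ≠ 0 → f ∈ Cp ∪ Cm) → ∀ f ∈ Cp ∪ Cm, φ f ≠ 0

/-- A circuit signature: a choice, for each cycle, of exactly one of its two
orientations. -/
def IsCircuitSignature [Fintype E] [DecidableEq E] [DecidableEq V] (t h : E → V)
    (σ : Set (Finset E × Finset E)) : Prop :=
  (∀ q ∈ σ, IsSignedCycle t h q.1 q.2) ∧
    ∀ Cp Cm : Finset E, IsSignedCycle t h Cp Cm → ((Cp, Cm) ∈ σ ↔ (Cm, Cp) ∉ σ)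

/-- Acyclicity of a circuit signature: no nontrivial nonnegative combination of the
vectors of the chosen signed cycles vanishes. -/
def IsAcyclicSig [DecidableEq E] (σ : Set (Finset E × Finset E)) : Prop :=
  ∀ (s : Finset (Finset E × Finset E)) (a : Finset E × Finset E → ℝ),
    ↑s ⊆ σ → (∀ q, 0 ≤ a q) → (∃ q ∈ s, a q ≠ 0) →
      ∑ q ∈ s, a q • chiVec q.1 q.2 ≠ 0

/-- A weight function is generic if the two arcs of every cycle have different
total weights. -/
def GenericWeight [Fintype E] [DecidableEq E] [DecidableEq V] (t h : E → V)
    (w : E → ℝ) : Prop :=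
  ∀ Cp Cm : Finset E, IsSignedCycle t h Cp Cm → ∑ f ∈ Cp, w f ≠ ∑ f ∈ Cm, w f

/-- The circuit signature `cir^w`: orient each cycle so that the positive arc has
the larger total `w`-weight. -/
def cirw [Fintype E] [DecidableEq E] [DecidableEq V] (t h : E → V) (w : E → ℝ) :
    Set (Finset E × Finset E) :=
  {q | IsSignedCycle t h q.1 q.2 ∧ ∑ f ∈ q.2, w f < ∑ f ∈ q.1, w f}

/-- `tree(D,σ)`: spanning trees `T` such that every non-tree edge `f` lies in the
positive arc of the (σ-oriented) fundamental cycle of `f`, i.e. of the unique cycle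
contained in `T ∪ {f}`. -/
def treeSet [Fintype V] [Fintype E] [DecidableEq V] [DecidableEq E] (t h : E → V)
    (σ : Set (Finset E × Finset E)) : Set (Finset E) :=
  {T | IsSpanningTree t h T ∧
    ∀ f ∉ T, ∀ Cp Cm : Finset E, (Cp, Cm) ∈ σ → Cp ∪ Cm ⊆ insert f T → f ∈ Cp}

/-- `F` is a face of `Q`: the locus where some linear functional bounded above on `Q`
attains its maximum. -/
def IsFaceOf (Q F : Set (ι → ℝ)) : Prop :=
  ∃ (l : (ι → ℝ) →ₗ[ℝ] ℝ) (c : ℝ), (∀ y ∈ Q, l y ≤ c) ∧ F = {y ∈ Q | l y = c}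

/-- `F` is a facet of `Q`: a face of codimension one. -/
def IsFacetOf (Q F : Set (ι → ℝ)) : Prop :=
  IsFaceOf Q F ∧ pdim F + 1 = pdim Q

end

section StmtFiveAux

variable {V E : Type*} [Fintype V] [Fintype E] [DecidableEq V] [DecidableEq E]

lemma chi_dot5 (Cp Cm : Finset E) (w : E → ℝ) :
    ∑ e, chiVec Cp Cm e * w e = ∑ f ∈ Cp, w f - ∑ f ∈ Cm, w f := by
  simp only [chiVec, sub_mul, ite_mul, one_mul, zero_mul, Finset.sum_sub_distrib,
    Finset.sum_ite_mem, Finset.univ_inter]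

lemma clm_apply5 (f : (E → ℝ) →L[ℝ] ℝ) (x : E → ℝ) :
    f x = ∑ e, x e * f (Pi.single e 1) := by
  conv_lhs => rw [← Finset.univ_sum_single x]
  rw [map_sum]
  refine Finset.sum_congr rfl fun e _ => ?_
  have : (Pi.single e (x e) : E → ℝ) = x e • (Pi.single e (1:ℝ) : E → ℝ) := by
    rw [← Pi.single_smul, smul_eq_mul, mul_one]
  rw [this, map_smul, smul_eq_mul]

lemma acyclic_sep (t h : E → V) (σ : Set (Finset E × Finset E))
    (hac : IsAcyclicSig σ) :
    ∃ w : E → ℝ, ∀ q ∈ σ, ∑ f ∈ q.2, w f < ∑ f ∈ q.1, w f := by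
  classical
  set A : Set (E → ℝ) := (fun q : Finset E × Finset E => chiVec q.1 q.2) '' σ with hA
  have hfin : A.Finite := (Set.toFinite σ).image _
  have h0 : (0 : E → ℝ) ∉ convexHull ℝ A := by
    intro h0
    rw [_root_.convexHull_eq] at h0
    obtain ⟨ι, tt, wgt, z, hw0, hw1, hz, hc⟩ := h0
    rw [Finset.centerMass_eq_of_sum_1 _ _ hw1] at hc
    -- choose preimages
    have hex : ∀ i ∈ tt, ∃ q, q ∈ σ ∧ chiVec q.1 q.2 = z i := fun i hi => hz i hi
    choose! qf hqσ hqchi using hex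
    set s' : Finset (Finset E × Finset E) := tt.image qf with hs'
    set a : Finset E × Finset E → ℝ :=
      fun p => ∑ i ∈ tt.filter (fun i => qf i = p), wgt i with ha
    have hsum : ∑ p ∈ s', a p • chiVec p.1 p.2 = 0 := by
      have : ∑ p ∈ s', a p • chiVec p.1 p.2
          = ∑ p ∈ s', ∑ i ∈ tt.filter (fun i => qf i = p), wgt i • z i := by
        refine Finset.sum_congr rfl fun p hp => ?_
        rw [ha, Finset.sum_smul]
        refine Finset.sum_congr rfl fun i hi => ?_
        obtain ⟨hit, hqp⟩ := Finset.mem_filter.mp hi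
        rw [← hqchi i hit, hqp]
      rw [this, Finset.sum_fiberwise_of_maps_to (fun i hi => Finset.mem_image_of_mem qf hi),
        hc]
    have hane : ∃ p ∈ s', a p ≠ 0 := by
      by_contra hcon
      push_neg at hcon
      have : (1:ℝ) = 0 := by
        rw [← hw1, ← Finset.sum_fiberwise_of_maps_to
          (fun i hi => Finset.mem_image_of_mem qf hi) wgt]
        exact Finset.sum_eq_zero fun p hp => hcon p hp
      norm_num at this
    refine hac s' a ?_ ?_ hane hsum
    · intro p hp
      obtain ⟨i, hi, rfl⟩ := Finset.mem_image.mp hp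
      exact hqσ i hi
    · intro p
      exact Finset.sum_nonneg fun i hi => hw0 i (Finset.mem_filter.mp hi).1
  obtain ⟨f, u, hfu, hub⟩ := geometric_hahn_banach_point_closed
    (convex_convexHull ℝ A) (hfin.isCompact_convexHull (𝕜 := ℝ)).isClosed h0
  rw [map_zero] at hfu
  refine ⟨fun e => f (Pi.single e 1), fun q hq => ?_⟩
  have hmem : chiVec q.1 q.2 ∈ convexHull ℝ A :=
    subset_convexHull ℝ A (Set.mem_image_of_mem _ hq)
  have := hub _ hmem
  rw [clm_apply5 f (chiVec q.1 q.2), chi_dot5] at this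
  linarith

end StmtFiveAux

/-- a circuit signature is acyclic if and only if it arises as `cir^w`
for some generic weight function `w`. -/
theorem stmt5 {V E : Type*} [Fintype V] [Fintype E] [DecidableEq V] [DecidableEq E]
    (t h : E → V) (σ : Set (Finset E × Finset E)) (hσ : IsCircuitSignature t h σ) :
    IsAcyclicSig σ ↔ ∃ w : E → ℝ, GenericWeight t h w ∧ σ = cirw t h w := by
  constructor
  · intro hac
    obtain ⟨w, hw⟩ := acyclic_sep t h σ hac
    have hmem : ∀ q ∈ σ, q ∈ cirw t h w := fun q hq => ⟨hσ.1 q hq, hw q hq⟩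
    have hgen : GenericWeight t h w := by
      intro Cp Cm hsc
      by_cases hin : (Cp, Cm) ∈ σ
      · have := hw _ hin
        simp only at this
        linarith
      · have hin2 : (Cm, Cp) ∈ σ := by
          by_contra hcon
          exact hin (((hσ.2 Cp Cm hsc).mpr) hcon)
        have := hw _ hin2
        simp only at this
        linarith
    refine ⟨w, hgen, ?_⟩
    ext q
    constructor
    · exact fun hq => hmem q hq
    · rintro ⟨hsc, hlt⟩
      by_contra hcon
      have hq2 : (q.2, q.1) ∈ σ := by
        have := (hσ.2 q.1 q.2 hsc).mpr
        by_contra hcon2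
        exact hcon (this hcon2)
      have := hw _ hq2
      simp only at this
      linarith
  · rintro ⟨w, hgen, rfl⟩
    intro s a hs ha ⟨q0, hq0s, hq0⟩ hsum
    have h1 : ∑ q ∈ s, a q * (∑ f ∈ q.1, w f - ∑ f ∈ q.2, w f) = 0 := by
      have h2 : ∑ q ∈ s, a q * (∑ f ∈ q.1, w f - ∑ f ∈ q.2, w f)
          = ∑ e, (∑ q ∈ s, a q • chiVec q.1 q.2) e * w e := by
        simp only [Finset.sum_apply, Pi.smul_apply, smul_eq_mul, Finset.sum_mul]
        rw [Finset.sum_comm]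
        refine Finset.sum_congr rfl fun q _ => ?_
        rw [← chi_dot5 q.1 q.2 w, Finset.mul_sum]
        exact Finset.sum_congr rfl fun e _ => by ring
      rw [h2, hsum]
      simp
    have hterm : ∀ q ∈ s, 0 ≤ a q * (∑ f ∈ q.1, w f - ∑ f ∈ q.2, w f) := by
      intro q hq
      have hcw := hs hq
      have : ∑ f ∈ q.2, w f < ∑ f ∈ q.1, w f := hcw.2
      exact mul_nonneg (ha q) (by linarith)
    have h0 := (Finset.sum_eq_zero_iff_of_nonneg hterm).mp h1 q0 hq0s
    have hcw := hs hq0s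
    have hlt : ∑ f ∈ q0.2, w f < ∑ f ∈ q0.1, w f := hcw.2
    have ha0 : 0 < a q0 := lt_of_le_of_ne (ha q0) (Ne.symm hq0)
    nlinarith
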